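/- arXiv:1505.07299 — 2 statements merged into one kernel-verified Lean document; each statement's English description precedes it below -/
import Mathlib

section
/- On ℍ^{m-1}×ℂ with coordinates z_i = x_i + i y_i, let ψ(z) = (y_1⋯y_{m-1})^{-1}. Then i∂\bar∂(ψ(z) + |z_m|²)/ψ(z) = α + β + γ, where α = i Σ_{i=1}^{m-1} dz_i∧d\bar{z}_i/(4y_i²), β = i(y_1⋯y_{m-1}) dz_m∧d\bar{z}_m, and γ = i Σ_{k,ℓ=1}^{m-1} dz_k∧d\bar{z}_ℓ/(4 y_k y_ℓ). -/
open Finset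

/-- The Wirtinger derivative `∂_k f = (∂_{x_k} f - i ∂_{y_k} f)/2`. -/
noncomputable def wD {n : ℕ} (k : Fin (n + 1)) (f : (Fin (n + 1) → ℂ) → ℂ)
    (z : Fin (n + 1) → ℂ) : ℂ :=
  (fderiv ℝ f z (Pi.single k 1) - Complex.I * fderiv ℝ f z (Pi.single k Complex.I)) / 2

/-- The conjugate Wirtinger derivative `∂_{\bar k} f = (∂_{x_k} f + i ∂_{y_k} f)/2`. -/
noncomputable def wDbar {n : ℕ} (k : Fin (n + 1)) (f : (Fin (n + 1) → ℂ) → ℂ)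
    (z : Fin (n + 1) → ℂ) : ℂ :=
  (fderiv ℝ f z (Pi.single k 1) + Complex.I * fderiv ℝ f z (Pi.single k Complex.I)) / 2

section OTAux
open Complex ContinuousLinearMap

noncomputable def Pf (n : ℕ) (w : Fin (n+1) → ℂ) : ℝ := ∏ i : Fin n, (w i.castSucc).im

noncomputable def DP (n : ℕ) (z : Fin (n+1) → ℂ) : (Fin (n+1) → ℂ) →L[ℝ] ℝ :=
  ∑ i : Fin n, (∏ j ∈ Finset.univ.erase i, (z j.castSucc).im) •
    ((Complex.imCLM).comp (ContinuousLinearMap.proj i.castSucc))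

lemma hasFDerivAt_Pf {n : ℕ} (z : Fin (n+1) → ℂ) : HasFDerivAt (Pf n) (DP n z) z := by
  have h : ∀ i ∈ (univ : Finset (Fin n)),
      HasFDerivAt (fun w : Fin (n+1) → ℂ => (w i.castSucc).im)
      ((Complex.imCLM).comp (ContinuousLinearMap.proj i.castSucc)) z := fun i _ => by
    exact ((Complex.imCLM).comp (ContinuousLinearMap.proj i.castSucc : (Fin (n+1) → ℂ) →L[ℝ] ℂ)).hasFDerivAt
  exact HasFDerivAt.finset_prod h

lemma DP_apply {n : ℕ} (z : Fin (n+1) → ℂ) (k : Fin (n+1)) (c : ℂ) :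
    DP n z (Pi.single k c) =
      if h : k = Fin.last n then 0
      else (∏ j ∈ Finset.univ.erase (k.castPred h), (z j.castSucc).im) * c.im := by
  rw [DP, ContinuousLinearMap.sum_apply]
  by_cases h : k = Fin.last n
  · rw [dif_pos h]
    refine Finset.sum_eq_zero fun i _ => ?_
    have h0 : (Pi.single k c : Fin (n+1) → ℂ) (i.castSucc) = 0 :=
      Pi.single_eq_of_ne (by rw [h]; exact (Fin.castSucc_lt_last i).ne) _
    simp [h0]
  · rw [dif_neg h, Finset.sum_eq_single (k.castPred h)]
    · simp [Fin.castSucc_castPred]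
    · intro i _ hi
      have h0 : (Pi.single k c : Fin (n+1) → ℂ) (i.castSucc) = 0 := by
        refine Pi.single_eq_of_ne (fun hc => hi ?_) _
        exact Fin.castSucc_injective n (by rw [hc, Fin.castSucc_castPred])
      simp [h0]
    · simp

noncomputable def Du (n : ℕ) (z : Fin (n+1) → ℂ) : (Fin (n+1) → ℂ) →L[ℝ] ℂ :=
  Complex.ofRealCLM.comp (((1 : ℝ →L[ℝ] ℝ).smulRight (-(Pf n z ^ 2)⁻¹)).comp (DP n z)) +
  (z (Fin.last n) • ((Complex.conjCLE : ℂ →L[ℝ] ℂ).comp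
      (ContinuousLinearMap.proj (Fin.last n) : (Fin (n+1) → ℂ) →L[ℝ] ℂ)) +
   (starRingEnd ℂ) (z (Fin.last n)) •
      (ContinuousLinearMap.proj (Fin.last n) : (Fin (n+1) → ℂ) →L[ℝ] ℂ))

lemma hasFDerivAt_u {n : ℕ} (z : Fin (n+1) → ℂ) (hz : Pf n z ≠ 0) :
    HasFDerivAt
      (fun w => ((Pf n w)⁻¹ : ℝ) + w (Fin.last n) * (starRingEnd ℂ) (w (Fin.last n)))
      (Du n z) z := by
  have h1 : HasFDerivAt (fun w : Fin (n+1) → ℂ => (((Pf n w)⁻¹ : ℝ) : ℂ))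
      (Complex.ofRealCLM.comp (((1 : ℝ →L[ℝ] ℝ).smulRight (-(Pf n z ^ 2)⁻¹)).comp (DP n z))) z :=
    Complex.ofRealCLM.hasFDerivAt.comp z ((hasFDerivAt_inv hz).comp z (hasFDerivAt_Pf z))
  have hc : HasFDerivAt (fun w : Fin (n+1) → ℂ => w (Fin.last n))
      (ContinuousLinearMap.proj (Fin.last n) : (Fin (n+1) → ℂ) →L[ℝ] ℂ) z := by
    exact (ContinuousLinearMap.proj (Fin.last n) : (Fin (n+1) → ℂ) →L[ℝ] ℂ).hasFDerivAt
  have hd : HasFDerivAt (fun w : Fin (n+1) → ℂ => (starRingEnd ℂ) (w (Fin.last n)))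
      ((Complex.conjCLE : ℂ →L[ℝ] ℂ).comp
        (ContinuousLinearMap.proj (Fin.last n) : (Fin (n+1) → ℂ) →L[ℝ] ℂ)) z := by
    exact ((Complex.conjCLE : ℂ →L[ℝ] ℂ).comp
      (ContinuousLinearMap.proj (Fin.last n) : (Fin (n+1) → ℂ) →L[ℝ] ℂ)).hasFDerivAt
  exact h1.add (hc.mul hd)

lemma wDbar_u_eq {n : ℕ} (z : Fin (n+1) → ℂ) (hz : ∀ i : Fin n, 0 < (z i.castSucc).im)
    (ℓ : Fin (n+1)) :
    wDbar ℓ (fun w => ((Pf n w)⁻¹ : ℝ) + w (Fin.last n) * (starRingEnd ℂ) (w (Fin.last n))) z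
    = if ℓ = Fin.last n then z (Fin.last n)
      else (-Complex.I/2) * (((Pf n z * (z ℓ).im)⁻¹ : ℝ) : ℂ) := by
  have hP : 0 < Pf n z := Finset.prod_pos fun i _ => hz i
  rw [wDbar, (hasFDerivAt_u z hP.ne').fderiv]
  by_cases h : ℓ = Fin.last n
  · subst h
    have e : ∀ c : ℂ, (Du n z) (Pi.single (Fin.last n) c)
        = z (Fin.last n) * (starRingEnd ℂ) c + (starRingEnd ℂ) (z (Fin.last n)) * c := by
      intro c
      simp [Du, DP_apply, Complex.conjCLE_apply, smul_eq_mul]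
    rw [e, e, if_pos rfl]
    simp only [map_one, mul_one, Complex.conj_I]
    ring_nf
    rw [Complex.I_sq]
    ring
  · have hlast : ∀ c : ℂ, (Pi.single ℓ c : Fin (n+1) → ℂ) (Fin.last n) = 0 := by
      intro c; rw [Pi.single_apply, if_neg (Ne.symm h)]
    have key : (∏ j ∈ Finset.univ.erase (ℓ.castPred h), (z j.castSucc).im) * (-(Pf n z ^ 2)⁻¹)
        = -(Pf n z * (z ℓ).im)⁻¹ := by
      have ha : (∏ j ∈ Finset.univ.erase (ℓ.castPred h), (z j.castSucc).im) * (z ℓ).im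
          = Pf n z := by
        conv_lhs => rw [show (z ℓ).im = (z ((ℓ.castPred h).castSucc)).im by
          rw [Fin.castSucc_castPred]]
        exact Finset.prod_erase_mul _ _ (Finset.mem_univ _)
      have hy : (0:ℝ) < (z ℓ).im := by
        have := hz (ℓ.castPred h)
        rwa [Fin.castSucc_castPred] at this
      have ha' : (∏ j ∈ Finset.univ.erase (ℓ.castPred h), (z j.castSucc).im) ≠ 0 := by
        intro h0; rw [h0, zero_mul] at ha; exact hP.ne' ha.symm
      field_simp
      nlinarith [ha]
    have e1 : (Du n z) (Pi.single ℓ 1) = 0 := by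
      simp [Du, DP_apply, dif_neg h, hlast, smul_eq_mul]
    have e2 : (Du n z) (Pi.single ℓ Complex.I) = ((-(Pf n z * (z ℓ).im)⁻¹ : ℝ) : ℂ) := by
      simp only [Du, ContinuousLinearMap.add_apply, ContinuousLinearMap.comp_apply,
        ContinuousLinearMap.smul_apply, ContinuousLinearMap.proj_apply,
        ContinuousLinearMap.smulRight_apply, ContinuousLinearMap.one_apply,
        DP_apply, dif_neg h, hlast, Complex.conjCLE_apply, smul_eq_mul,
        Complex.I_im, mul_one, map_zero, mul_zero, add_zero, Complex.ofRealCLM_apply]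
      rw [key]
    rw [e1, e2, if_neg h]
    push_cast
    ring

noncomputable def DQ (n : ℕ) (ℓ : Fin (n+1)) (z : Fin (n+1) → ℂ) : (Fin (n+1) → ℂ) →L[ℝ] ℝ :=
  Pf n z • ((Complex.imCLM).comp (ContinuousLinearMap.proj ℓ : (Fin (n+1) → ℂ) →L[ℝ] ℂ)) +
    (z ℓ).im • DP n z

noncomputable def DG (n : ℕ) (ℓ : Fin (n+1)) (z : Fin (n+1) → ℂ) :
    (Fin (n+1) → ℂ) →L[ℝ] ℂ :=
  (-Complex.I/2) • (Complex.ofRealCLM.comp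
    (((1 : ℝ →L[ℝ] ℝ).smulRight (-((Pf n z * (z ℓ).im) ^ 2)⁻¹)).comp (DQ n ℓ z)))

lemma hasFDerivAt_G {n : ℕ} (ℓ : Fin (n+1)) (z : Fin (n+1) → ℂ)
    (hQ : Pf n z * (z ℓ).im ≠ 0) :
    HasFDerivAt (fun w => (-Complex.I/2) * (((Pf n w * (w ℓ).im)⁻¹ : ℝ) : ℂ))
      (DG n ℓ z) z := by
  have him : HasFDerivAt (fun w : Fin (n+1) → ℂ => (w ℓ).im)
      ((Complex.imCLM).comp (ContinuousLinearMap.proj ℓ : (Fin (n+1) → ℂ) →L[ℝ] ℂ)) z := by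
    exact ((Complex.imCLM).comp (ContinuousLinearMap.proj ℓ : (Fin (n+1) → ℂ) →L[ℝ] ℂ)).hasFDerivAt
  have hq : HasFDerivAt (fun w => Pf n w * (w ℓ).im) (DQ n ℓ z) z :=
    (hasFDerivAt_Pf z).mul him
  have hinv := (hasFDerivAt_inv hQ).comp z hq
  have := (Complex.ofRealCLM.hasFDerivAt.comp z hinv).const_mul (-Complex.I/2)
  exact this

lemma DG_apply_one {n : ℕ} (ℓ k : Fin (n+1)) (z : Fin (n+1) → ℂ) (h : ℓ ≠ Fin.last n) :
    DG n ℓ z (Pi.single k 1) = 0 := by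
  have hs : (Pi.single k (1:ℂ) : Fin (n+1) → ℂ) ℓ = if ℓ = k then 1 else 0 :=
    Pi.single_apply k 1 ℓ
  simp [DG, DQ, DP_apply, hs, smul_eq_mul, apply_ite Complex.im]

lemma DG_apply_I {n : ℕ} (ℓ k : Fin (n+1)) (z : Fin (n+1) → ℂ) (h : ℓ ≠ Fin.last n) :
    DG n ℓ z (Pi.single k Complex.I)
    = (-Complex.I/2) * ((((Pf n z * (if ℓ = k then 1 else 0)
        + (z ℓ).im * (if hk : k = Fin.last n then 0
            else ∏ j ∈ Finset.univ.erase (k.castPred hk), (z j.castSucc).im))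
        * (-((Pf n z * (z ℓ).im) ^ 2)⁻¹)) : ℝ) : ℂ) := by
  have hs : (Pi.single k (Complex.I) : Fin (n+1) → ℂ) ℓ = if ℓ = k then Complex.I else 0 :=
    Pi.single_apply k Complex.I ℓ
  simp only [DG, DQ, ContinuousLinearMap.add_apply, ContinuousLinearMap.comp_apply,
    ContinuousLinearMap.smul_apply, ContinuousLinearMap.proj_apply,
    ContinuousLinearMap.smulRight_apply, ContinuousLinearMap.one_apply,
    DP_apply, hs, Complex.imCLM_apply, Complex.ofRealCLM_apply, smul_eq_mul]
  by_cases hk : k = Fin.last n <;> simp [hk, apply_ite Complex.im]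

end OTAux

/-- The coefficient matrix of the (1,1)-form `α + β + γ` on `ℍ^n × ℂ` (here `m = n+1`):
`α = iΣ dz_i∧d\bar z_i/(4y_i²)`, `β = i(y₁⋯y_n)dz_m∧d\bar z_m`,
`γ = iΣ dz_k∧d\bar z_ℓ/(4y_k y_ℓ)`. -/
noncomputable def otCoeff {n : ℕ} (z : Fin (n + 1) → ℂ) (k ℓ : Fin (n + 1)) : ℂ :=
  if k = Fin.last n then
    (if ℓ = Fin.last n then ∏ i : Fin n, ((z i.castSucc).im : ℂ) else 0)
  else if ℓ = Fin.last n then 0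
  else (if k = ℓ then 1 / (4 * ((z k).im : ℂ) ^ 2) else 0) +
    1 / (4 * ((z k).im : ℂ) * ((z ℓ).im : ℂ))

/-- On `ℍ^n × ℂ` with `ψ(z) = (y₁⋯y_n)⁻¹`, the computation
`i∂∂̄(ψ + |z_m|²)/ψ = α + β + γ`, stated coefficientwise:
`∂_k ∂_{\bar ℓ}(ψ + z_m \bar z_m)/ψ` equals the `(k,ℓ)`-coefficient of `α + β + γ`. -/
theorem ot_metric_ddbar (n : ℕ) (hn : 1 ≤ n) :
    let ψ : (Fin (n + 1) → ℂ) → ℝ := fun z => (∏ i : Fin n, (z i.castSucc).im)⁻¹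
    let u : (Fin (n + 1) → ℂ) → ℂ :=
      fun z => (ψ z : ℂ) + z (Fin.last n) * (starRingEnd ℂ) (z (Fin.last n))
    ∀ z : Fin (n + 1) → ℂ, (∀ i : Fin n, 0 < (z i.castSucc).im) →
      ∀ k ℓ : Fin (n + 1), wD k (fun w => wDbar ℓ u w) z / (ψ z : ℂ) = otCoeff z k ℓ := by
  intro ψ u z hz k ℓ
  show wD k (fun w => wDbar ℓ (fun w => (((Pf n w)⁻¹ : ℝ) : ℂ)
      + w (Fin.last n) * (starRingEnd ℂ) (w (Fin.last n))) w) z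
      / (((Pf n z)⁻¹ : ℝ) : ℂ) = otCoeff z k ℓ
  have hP : 0 < Pf n z := Finset.prod_pos fun i _ => hz i
  have hUopen : IsOpen {w : Fin (n+1) → ℂ | ∀ i : Fin n, 0 < (w i.castSucc).im} := by
    have : {w : Fin (n+1) → ℂ | ∀ i : Fin n, 0 < (w i.castSucc).im}
        = ⋂ i : Fin n, {w : Fin (n+1) → ℂ | 0 < (w i.castSucc).im} := by
      ext w; simp [Set.mem_iInter]
    rw [this]
    exact isOpen_iInter_of_finite fun i =>
      isOpen_lt continuous_const ((Complex.continuous_im).comp (continuous_apply _))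
  have hzU : z ∈ {w : Fin (n+1) → ℂ | ∀ i : Fin n, 0 < (w i.castSucc).im} := hz
  by_cases hℓ : ℓ = Fin.last n
  · subst hℓ
    have hfeq : (fun w => wDbar (Fin.last n) (fun w => (((Pf n w)⁻¹ : ℝ) : ℂ)
        + w (Fin.last n) * (starRingEnd ℂ) (w (Fin.last n))) w)
        =ᶠ[nhds z] (fun w => w (Fin.last n)) := by
      filter_upwards [hUopen.mem_nhds hzU] with w hw
      have h := wDbar_u_eq w hw (Fin.last n)
      rwa [if_pos rfl] at h
    have hfd : fderiv ℝ (fun w : Fin (n+1) → ℂ => w (Fin.last n)) z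
        = (ContinuousLinearMap.proj (Fin.last n) : (Fin (n+1) → ℂ) →L[ℝ] ℂ) := by
      exact (ContinuousLinearMap.proj (Fin.last n) :
        (Fin (n+1) → ℂ) →L[ℝ] ℂ).hasFDerivAt.fderiv
    rw [wD, hfeq.fderiv_eq, hfd]
    by_cases hk : k = Fin.last n
    · subst hk
      rw [otCoeff, if_pos rfl, if_pos rfl]
      simp only [ContinuousLinearMap.proj_apply, Pi.single_eq_same]
      rw [Complex.I_mul_I]
      rw [show ((1:ℂ) - -1)/2 = 1 by norm_num]
      rw [Pf]
      push_cast
      rw [one_div, inv_inv]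
    · rw [otCoeff, if_neg hk, if_pos rfl]
      have h0 : ∀ c : ℂ, (Pi.single k c : Fin (n+1) → ℂ) (Fin.last n) = 0 := by
        intro c; rw [Pi.single_apply, if_neg (Ne.symm hk)]
      simp [h0]
  · have hy : (0:ℝ) < (z ℓ).im := by
      have := hz (ℓ.castPred hℓ)
      rwa [Fin.castSucc_castPred] at this
    have hQ : Pf n z * (z ℓ).im ≠ 0 := (mul_pos hP hy).ne'
    have hfeq : (fun w => wDbar ℓ (fun w => (((Pf n w)⁻¹ : ℝ) : ℂ)
        + w (Fin.last n) * (starRingEnd ℂ) (w (Fin.last n))) w)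
        =ᶠ[nhds z] (fun w => (-Complex.I/2) * (((Pf n w * (w ℓ).im)⁻¹ : ℝ) : ℂ)) := by
      filter_upwards [hUopen.mem_nhds hzU] with w hw
      have h := wDbar_u_eq w hw ℓ
      rwa [if_neg hℓ] at h
    rw [wD, hfeq.fderiv_eq, (hasFDerivAt_G ℓ z hQ).fderiv, DG_apply_one ℓ k z hℓ,
      DG_apply_I ℓ k z hℓ]
    by_cases hk : k = Fin.last n
    · subst hk
      rw [otCoeff, if_pos rfl]
      simp [hℓ]
    · rw [otCoeff, if_neg hk, if_neg hℓ, dif_neg hk]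
      have ha : (∏ j ∈ Finset.univ.erase (k.castPred hk), (z j.castSucc).im) * (z k).im
          = Pf n z := by
        conv_lhs => rw [show (z k).im = (z ((k.castPred hk).castSucc)).im by
          rw [Fin.castSucc_castPred]]
        exact Finset.prod_erase_mul _ _ (Finset.mem_univ _)
      have hyk : (0:ℝ) < (z k).im := by
        have := hz (k.castPred hk)
        rwa [Fin.castSucc_castPred] at this
      set a := ∏ j ∈ Finset.univ.erase (k.castPred hk), (z j.castSucc).im with hadef
      by_cases hkl : k = ℓ
      · subst hkl
        rw [if_pos rfl, if_pos rfl]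
        have hreal : (Pf n z * 1 + (z k).im * a) * -((Pf n z * (z k).im) ^ 2)⁻¹
            = -2 * (Pf n z * (z k).im ^ 2)⁻¹ := by
          field_simp
          nlinarith [ha]
        rw [hreal]
        push_cast
        have h1 : ((z k).im : ℂ) ≠ 0 := Complex.ofReal_ne_zero.mpr hyk.ne'
        have h2 : ((Pf n z : ℝ) : ℂ) ≠ 0 := Complex.ofReal_ne_zero.mpr hP.ne'
        field_simp
        ring_nf
        rw [Complex.I_sq]
        ring
      · rw [if_neg (fun h => hkl h.symm), if_neg hkl]
        have hreal : (Pf n z * 0 + (z ℓ).im * a) * -((Pf n z * (z ℓ).im) ^ 2)⁻¹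
            = -((Pf n z * (z ℓ).im * (z k).im)⁻¹ * Pf n z * (Pf n z)⁻¹) := by
          field_simp
          nlinarith [ha]
        rw [hreal]
        push_cast
        have h1 : ((z k).im : ℂ) ≠ 0 := Complex.ofReal_ne_zero.mpr hyk.ne'
        have h1' : ((z ℓ).im : ℂ) ≠ 0 := Complex.ofReal_ne_zero.mpr hy.ne'
        have h2 : ((Pf n z : ℝ) : ℂ) ≠ 0 := Complex.ofReal_ne_zero.mpr hP.ne'
        field_simp
        ring_nf
        simp [Complex.I_sq]
end

section
/- With α, β, γ as on ℍ^{m-1}×ℂ (α = i Σ dz_i∧d\bar{z}_i/(4y_i²), β = i(y_1⋯y_{m-1})dz_m∧d\bar{z}_m, γ = i Σ_{k,ℓ} dz_k∧d\bar{z}_ℓ/(4y_k y_ℓ)), the Chern-Ricci form of ω_OT = α + β + γ satisfies Ric(ω_OT) = -i∂\bar∂ log det(g_OT) = -α. -/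
open Finset

/-- The coefficient matrix of `α = iΣ dz_i∧d\bar z_i/(4y_i²)` on `ℍ^n × ℂ`. -/
noncomputable def alphaCoeff {n : ℕ} (z : Fin (n + 1) → ℂ) (k ℓ : Fin (n + 1)) : ℂ :=
  if k = ℓ ∧ ¬ k = Fin.last n then 1 / (4 * ((z k).im : ℂ) ^ 2) else 0

lemma otCoeff_det {n : ℕ} (z : Fin (n + 1) → ℂ)
    (hz : ∀ i : Fin n, 0 < (z i.castSucc).im) :
    Matrix.det (Matrix.of fun a b => otCoeff z a b)
      = (((n : ℂ) + 1) / 4 ^ n) * ∏ i : Fin n, (((z i.castSucc).im : ℂ))⁻¹ := by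
  have hy : ∀ i : Fin n, ((z i.castSucc).im : ℂ) ≠ 0 := by
    intro i
    exact_mod_cast (hz i).ne'
  set y : Fin n → ℂ := fun i => ((z i.castSucc).im : ℂ) with hydef
  set u : Fin n → ℂ := fun i => (2 * y i)⁻¹ with hudef
  have key : Matrix.det (Matrix.of fun a b => otCoeff z a b)
      = Matrix.det (Matrix.fromBlocks
          (Matrix.diagonal u * (1 + Matrix.replicateCol (Fin 1) (1 : Fin n → ℂ) * Matrix.replicateRow (Fin 1) (1 : Fin n → ℂ)) *
            Matrix.diagonal u)
          0 0 (Matrix.of fun (_ _ : Fin 1) => ∏ i : Fin n, y i)) := by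
    rw [← Matrix.det_submatrix_equiv_self (finSumFinEquiv (m := n) (n := 1))]
    congr 1
    ext a b
    cases a with
    | inl i =>
      cases b with
      | inl j =>
        simp only [Matrix.submatrix_apply, finSumFinEquiv_apply_left, Matrix.of_apply,
          Matrix.fromBlocks_apply₁₁]
        have hi : (Fin.castAdd 1 i : Fin (n+1)) = i.castSucc := rfl
        have hj : (Fin.castAdd 1 j : Fin (n+1)) = j.castSucc := rfl
        rw [hi, hj]
        have hine : i.castSucc ≠ Fin.last n := (Fin.castSucc_lt_last i).ne
        have hjne : j.castSucc ≠ Fin.last n := (Fin.castSucc_lt_last j).ne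
        rw [otCoeff, if_neg hine, if_neg hjne]
        rw [Matrix.mul_diagonal, Matrix.diagonal_mul]
        simp only [Matrix.add_apply, Matrix.one_apply, Matrix.mul_apply, Matrix.replicateCol_apply,
          Matrix.replicateRow_apply, Pi.one_apply, Finset.sum_const, Finset.card_univ, Fintype.card_fin,
          one_smul, one_mul, mul_one]
        by_cases h : i = j
        · subst h
          rw [if_pos rfl, if_pos (by simp), hudef]
          field_simp
          ring
        · rw [if_neg (by simpa using h), if_neg h, hudef]
          field_simp
          ring
      | inr c =>
        simp only [Matrix.submatrix_apply, finSumFinEquiv_apply_left, finSumFinEquiv_apply_right,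
          Matrix.of_apply, Matrix.fromBlocks_apply₁₂, Matrix.zero_apply]
        have hc : (Fin.natAdd n c : Fin (n+1)) = Fin.last n := by
          apply Fin.ext; simp only [Fin.coe_natAdd, Fin.val_last]
          have hc0 : (c:ℕ) = 0 := Nat.lt_one_iff.mp c.isLt; omega
        rw [hc, otCoeff,
          if_neg (show (Fin.castAdd 1 i : Fin (n+1)) ≠ Fin.last n from (Fin.castSucc_lt_last i).ne),
          if_pos rfl]
    | inr c =>
      cases b with
      | inl j =>
        simp only [Matrix.submatrix_apply, finSumFinEquiv_apply_right, finSumFinEquiv_apply_left,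
          Matrix.of_apply, Matrix.fromBlocks_apply₂₁, Matrix.zero_apply]
        have hc : (Fin.natAdd n c : Fin (n+1)) = Fin.last n := by
          apply Fin.ext; simp only [Fin.coe_natAdd, Fin.val_last]
          have hc0 : (c:ℕ) = 0 := Nat.lt_one_iff.mp c.isLt; omega
        rw [hc, otCoeff, if_pos rfl,
          if_neg (show (Fin.castAdd 1 j : Fin (n+1)) ≠ Fin.last n from (Fin.castSucc_lt_last j).ne)]
      | inr c' =>
        simp only [Matrix.submatrix_apply, finSumFinEquiv_apply_right, Matrix.of_apply,
          Matrix.fromBlocks_apply₂₂]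
        have hc : ∀ d : Fin 1, (Fin.natAdd n d : Fin (n+1)) = Fin.last n := by
          intro d; apply Fin.ext; simp only [Fin.coe_natAdd, Fin.val_last]
          have hc0 : (d:ℕ) = 0 := Nat.lt_one_iff.mp d.isLt; omega
        rw [hc, hc, otCoeff, if_pos rfl, if_pos rfl]
  rw [key, Matrix.det_fromBlocks_zero₂₁, Matrix.det_mul, Matrix.det_mul,
    Matrix.det_diagonal]
  erw [Matrix.det_one_add_replicateCol_mul_replicateRow]
  have hdet1 : Matrix.det (Matrix.of fun (_ _ : Fin 1) => ∏ i : Fin n, y i)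
      = ∏ i : Fin n, y i := Matrix.det_fin_one _
  rw [hdet1]
  have hdot : dotProduct (1 : Fin n → ℂ) (1 : Fin n → ℂ) = (n : ℂ) := by
    simp [dotProduct]
  rw [hdot, hudef]
  rw [Finset.prod_inv_distrib, Finset.prod_mul_distrib]
  have h4 : ∏ _i : Fin n, (2:ℂ) = 2 ^ n := by simp
  rw [h4]
  have hyne : ∏ i : Fin n, y i ≠ 0 := Finset.prod_ne_zero_iff.2 fun i _ => hy i
  have h24 : ((4:ℂ)) ^ n = (2 ^ n) ^ 2 := by
    rw [← pow_mul, mul_comm n 2, pow_mul]; norm_num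
  have hPQ : (∏ i : Fin n, ((z i.castSucc).im : ℂ)) * ∏ x : Fin n, 1 / ((z x.castSucc).im : ℂ) = 1 := by
    rw [← Finset.prod_mul_distrib]; exact Finset.prod_eq_one fun i _ => mul_one_div_cancel (hy i)
  field_simp
  all_goals simp only [hydef]
  all_goals rw [h24]
  all_goals linear_combination (-((n : ℂ) * 2 ^ (n * 2) + 2 ^ (n * 2))) * hPQ

/-- The "true" value of `log det g_OT` on the domain. -/
noncomputable def gFun {n : ℕ} (w : Fin (n + 1) → ℂ) : ℂ :=
  (Real.log (((n : ℝ) + 1) / 4 ^ n) : ℂ) - ∑ i : Fin n, (Real.log ((w i.castSucc).im) : ℂ)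

/-- The value of `∂_{\bar ℓ} log det g_OT` on the domain. -/
noncomputable def ricF {n : ℕ} (ℓ : Fin (n + 1)) (w : Fin (n + 1) → ℂ) : ℂ :=
  if ℓ = Fin.last n then 0 else -(Complex.I * ((((w ℓ).im)⁻¹ : ℝ) : ℂ)) / 2

lemma isOpen_U {n : ℕ} :
    IsOpen {w : Fin (n + 1) → ℂ | ∀ i : Fin n, 0 < (w i.castSucc).im} := by
  have h : {w : Fin (n + 1) → ℂ | ∀ i : Fin n, 0 < (w i.castSucc).im}
      = ⋂ i : Fin n, (fun w : Fin (n + 1) → ℂ => (w i.castSucc).im) ⁻¹' Set.Ioi 0 := by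
    ext w; simp [Set.mem_iInter]
  rw [h]
  exact isOpen_iInter_of_finite fun i =>
    (Complex.continuous_im.comp (continuous_apply _)).isOpen_preimage _ isOpen_Ioi

noncomputable def projIm {n : ℕ} (j : Fin (n + 1)) : (Fin (n + 1) → ℂ) →L[ℝ] ℝ :=
  Complex.imCLM.comp (ContinuousLinearMap.proj j)

lemma logdet_eq_gFun {n : ℕ} (w : Fin (n + 1) → ℂ)
    (hw : ∀ i : Fin n, 0 < (w i.castSucc).im) :
    Complex.log (Matrix.det (Matrix.of fun a b => otCoeff w a b)) = gFun w := by
  rw [otCoeff_det w hw]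
  have hprodpos : 0 < ∏ i : Fin n, ((w i.castSucc).im)⁻¹ :=
    Finset.prod_pos fun i _ => inv_pos.2 (hw i)
  have hcast : (((n:ℂ) + 1) / 4 ^ n) * ∏ i : Fin n, (((w i.castSucc).im : ℂ))⁻¹
      = (((((n:ℝ) + 1) / 4 ^ n) * ∏ i : Fin n, ((w i.castSucc).im)⁻¹ : ℝ) : ℂ) := by
    push_cast; ring
  have hpos : 0 < (((n:ℝ) + 1) / 4 ^ n) * ∏ i : Fin n, ((w i.castSucc).im)⁻¹ := by
    apply mul_pos (by positivity) hprodpos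
  rw [hcast, ← Complex.ofReal_log hpos.le]
  rw [Real.log_mul (by positivity) hprodpos.ne',
    Real.log_prod (fun i _ => (inv_pos.2 (hw i)).ne')]
  simp only [Real.log_inv]
  rw [gFun]
  push_cast
  rw [Finset.sum_neg_distrib]
  ring

lemma hasFDerivAt_gFun {n : ℕ} (w : Fin (n + 1) → ℂ)
    (hw : ∀ i : Fin n, 0 < (w i.castSucc).im) :
    HasFDerivAt (gFun (n := n))
      (-(∑ i : Fin n, Complex.ofRealCLM.comp
          (((w i.castSucc).im)⁻¹ • projIm i.castSucc))) w := by
  have h1 : ∀ i : Fin n, HasFDerivAt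
      (fun v : Fin (n + 1) → ℂ => (Real.log ((v i.castSucc).im) : ℂ))
      (Complex.ofRealCLM.comp (((w i.castSucc).im)⁻¹ • projIm i.castSucc)) w := by
    intro i
    have hr : HasFDerivAt (fun v : Fin (n + 1) → ℂ => (v i.castSucc).im)
        (projIm i.castSucc) w := (projIm i.castSucc).hasFDerivAt
    have hl : HasDerivAt Real.log (((w i.castSucc).im)⁻¹) ((w i.castSucc).im) :=
      Real.hasDerivAt_log (hw i).ne'
    have := hl.comp_hasFDerivAt w hr
    exact Complex.ofRealCLM.hasFDerivAt.comp w this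
  have h2 : HasFDerivAt
      (fun v : Fin (n + 1) → ℂ => ∑ i : Fin n, (Real.log ((v i.castSucc).im) : ℂ))
      (∑ i : Fin n, Complex.ofRealCLM.comp (((w i.castSucc).im)⁻¹ • projIm i.castSucc)) w :=
    HasFDerivAt.fun_sum fun i _ => h1 i
  have h3 := (hasFDerivAt_const ((Real.log (((n : ℝ) + 1) / 4 ^ n) : ℂ)) w).fun_sub h2
  have e : (gFun (n := n)) = fun v => (Real.log (((n : ℝ) + 1) / 4 ^ n) : ℂ) -
      ∑ i : Fin n, (Real.log ((v i.castSucc).im) : ℂ) := rfl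
  rw [e]
  simpa [gFun, zero_sub] using h3

lemma wDbar_gFun {n : ℕ} (ℓ : Fin (n + 1)) (w : Fin (n + 1) → ℂ)
    (hw : ∀ i : Fin n, 0 < (w i.castSucc).im) :
    wDbar ℓ (gFun (n := n)) w = ricF ℓ w := by
  have hD := (hasFDerivAt_gFun w hw).fderiv
  rw [wDbar, hD]
  simp only [ContinuousLinearMap.neg_apply, ContinuousLinearMap.coe_sum',
    Finset.sum_apply, ContinuousLinearMap.coe_comp', Function.comp_apply,
    ContinuousLinearMap.coe_smul', Pi.smul_apply, projIm,
    Complex.imCLM_apply, ContinuousLinearMap.proj_apply, Complex.ofRealCLM_apply]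
  have e1 : ∀ i : Fin n, (Pi.single ℓ (1:ℂ) : Fin (n+1) → ℂ) i.castSucc
      = (if i.castSucc = ℓ then (1:ℂ) else 0) := by
    intro i; rw [Pi.single_apply]
  have e2 : ∀ i : Fin n, (Pi.single ℓ Complex.I : Fin (n+1) → ℂ) i.castSucc
      = (if i.castSucc = ℓ then Complex.I else (0:ℂ)) := by
    intro i; rw [Pi.single_apply]
  simp only [e1, e2, apply_ite Complex.im, Complex.one_im, Complex.zero_im, Complex.I_im]
  by_cases hℓ : ℓ = Fin.last n
  · subst hℓ
    have : ∀ i : Fin n, (i.castSucc = Fin.last n) = False := by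
      intro i; simp [(Fin.castSucc_lt_last i).ne]
    simp [this, ricF]
  · obtain ⟨j, hj⟩ := Fin.exists_castSucc_eq.2 hℓ
    subst hj
    rw [ricF, if_neg hℓ]
    have : ∀ i : Fin n, (i.castSucc = j.castSucc) = (i = j) := by
      intro i; simp [Fin.castSucc_inj]
    simp only [this]
    have s1 : ∑ x : Fin n, (((w x.castSucc).im⁻¹ • (if x = j then (0:ℝ) else 0) : ℝ) : ℂ) = 0 := by
      simp
    have s2 : ∑ x : Fin n, (((w x.castSucc).im⁻¹ • (if x = j then (1:ℝ) else 0) : ℝ) : ℂ)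
        = (((w j.castSucc).im⁻¹ : ℝ) : ℂ) := by
      simp only [smul_eq_mul, mul_ite, mul_one, mul_zero, apply_ite (Complex.ofReal),
        Complex.ofReal_zero]
      rw [Finset.sum_ite_eq' Finset.univ j (fun x => (((w x.castSucc).im⁻¹ : ℝ) : ℂ))]
      simp
    rw [s1, s2]
    ring

lemma wD_ricF {n : ℕ} (k ℓ : Fin (n + 1)) (z : Fin (n + 1) → ℂ)
    (hz : ∀ i : Fin n, 0 < (z i.castSucc).im) :
    wD k (ricF ℓ) z = alphaCoeff z k ℓ := by
  by_cases hℓ : ℓ = Fin.last n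
  · subst hℓ
    have hc : ricF (Fin.last n) = (fun _ : Fin (n+1) → ℂ => (0:ℂ)) := by
      funext w; rw [ricF, if_pos rfl]
    have ha : alphaCoeff z k (Fin.last n) = 0 := by
      rw [alphaCoeff, if_neg]; rintro ⟨h1, h2⟩; exact h2 h1
    rw [wD, hc, ha, fderiv_fun_const]
    simp
  · obtain ⟨j, hj⟩ := Fin.exists_castSucc_eq.2 hℓ
    have hy : ((z ℓ).im) ≠ 0 := by rw [← hj]; exact (hz j).ne'
    have hr : HasFDerivAt (fun w : Fin (n+1) → ℂ => (w ℓ).im) (projIm ℓ) z :=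
      (projIm ℓ).hasFDerivAt
    have hi : HasDerivAt (fun x : ℝ => x⁻¹) (-(((z ℓ).im) ^ 2)⁻¹) ((z ℓ).im) :=
      hasDerivAt_inv hy
    have h3 := hi.comp_hasFDerivAt z hr
    have h4 := Complex.ofRealCLM.hasFDerivAt.comp z h3
    have h5 := h4.const_mul (-(Complex.I / 2))
    have hfe : ricF ℓ = fun w : Fin (n+1) → ℂ =>
        -(Complex.I / 2) * ((((w ℓ).im)⁻¹ : ℝ) : ℂ) := by
      funext w; rw [ricF, if_neg hℓ]; ring
    have hD : fderiv ℝ (fun w : Fin (n+1) → ℂ =>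
          -(Complex.I / 2) * ((((w ℓ).im)⁻¹ : ℝ) : ℂ)) z
        = (-(Complex.I / 2)) • (Complex.ofRealCLM.comp ((-(((z ℓ).im) ^ 2)⁻¹) • projIm ℓ)) :=
      h5.fderiv
    rw [wD, hfe, hD]
    simp only [ContinuousLinearMap.smul_apply, ContinuousLinearMap.coe_comp',
      Function.comp_apply, ContinuousLinearMap.coe_smul', Pi.smul_apply, projIm,
      Complex.imCLM_apply, ContinuousLinearMap.proj_apply, Complex.ofRealCLM_apply]
    have e1 : (Pi.single k (1:ℂ) : Fin (n+1) → ℂ) ℓ = (if ℓ = k then (1:ℂ) else 0) := by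
      rw [Pi.single_apply]
    have e2 : (Pi.single k Complex.I : Fin (n+1) → ℂ) ℓ
        = (if ℓ = k then Complex.I else (0:ℂ)) := by
      rw [Pi.single_apply]
    rw [e1, e2]
    by_cases hk : ℓ = k
    · subst hk
      rw [alphaCoeff, if_pos (⟨rfl, hℓ⟩ : ℓ = ℓ ∧ ¬ℓ = Fin.last n)]
      simp only [if_pos rfl, Complex.one_im, Complex.I_im]
      have hyc : ((z ℓ).im : ℂ) ≠ 0 := by exact_mod_cast hy
      push_cast
      field_simp
      simp only [smul_eq_mul, Complex.one_im, Complex.I_im, mul_zero, mul_one, Complex.ofReal_zero,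
        Complex.ofReal_neg, Complex.ofReal_div, Complex.ofReal_one, Complex.ofReal_pow, Complex.I_sq]
      have hinv : 1 / ((z ℓ).im : ℂ) ^ 2 * ((z ℓ).im : ℂ) ^ 2 = 1 :=
        one_div_mul_cancel (pow_ne_zero 2 hyc)
      linear_combination (2:ℂ) * hinv +
        (-2 * ((z ℓ).im : ℂ) ^ 2 * ((z ℓ).im : ℂ)⁻¹ ^ 2) * Complex.I_sq
    · rw [if_neg hk, if_neg hk, alphaCoeff,
        if_neg (show ¬(k = ℓ ∧ ¬k = Fin.last n) from fun h => hk h.1.symm)]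
      simp

/-- The Chern–Ricci form of `ω_OT = α + β + γ` is `Ric(ω_OT) = -i∂∂̄ log det g_OT = -α`,
stated coefficientwise: `-∂_k∂_{\bar ℓ} log det g_OT = -α_{k\bar ℓ}` on `ℍ^n × ℂ`. -/
theorem ot_metric_ricci (n : ℕ) (hn : 1 ≤ n) :
    let logdet : (Fin (n + 1) → ℂ) → ℂ :=
      fun v => Complex.log (Matrix.det (Matrix.of fun a b => otCoeff v a b))
    ∀ z : Fin (n + 1) → ℂ, (∀ i : Fin n, 0 < (z i.castSucc).im) →
      ∀ k ℓ : Fin (n + 1),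
        -(wD k (fun w => wDbar ℓ logdet w) z) = -(alphaCoeff z k ℓ) := by
  intro logdet z hz k ℓ
  congr 1
  have hU : {w : Fin (n + 1) → ℂ | ∀ i : Fin n, 0 < (w i.castSucc).im} ∈ nhds z :=
    isOpen_U.mem_nhds hz
  have hev : (fun w => wDbar ℓ logdet w) =ᶠ[nhds z] ricF ℓ := by
    filter_upwards [hU] with w hw
    have h1 : logdet =ᶠ[nhds w] gFun := by
      filter_upwards [isOpen_U.mem_nhds hw] with u hu
      exact logdet_eq_gFun u hu
    have h2 : fderiv ℝ logdet w = fderiv ℝ (gFun (n := n)) w := h1.fderiv_eq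
    rw [← wDbar_gFun ℓ w hw, wDbar, wDbar, h2]
  have h3 : fderiv ℝ (fun w => wDbar ℓ logdet w) z = fderiv ℝ (ricF ℓ) z := hev.fderiv_eq
  rw [wD, h3, ← wD, wD_ricF k ℓ z hz]
end
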